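/- Let p be an odd prime. Then there exists x ∈ W(ℤ_p) such that x is a unit of W(ℤ_p) and p = [p] + V(F(x)) in W(ℤ_p). In particular, the unique y ∈ W(ℤ_p) with p = [p] + V(y) lies in the image of the Frobenius F and is itself a unit of W(ℤ_p). -/

import Mathlib

open WittVector

open Finset

section aux

variable {p : ℕ} [hp : Fact p.Prime]

lemma padic_p_dvd_iff (z : ℤ_[p]) : (p : ℤ_[p]) ∣ z ↔ PadicInt.toZMod z = 0 := by
  rw [← Ideal.mem_span_singleton, ← PadicInt.maximalIdeal_eq_span_p, ← PadicInt.ker_toZMod,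
    RingHom.mem_ker]

lemma padic_fermat (c : ℤ_[p]) : (p : ℤ_[p]) ∣ c ^ p - c := by
  rw [padic_p_dvd_iff]
  simp [ZMod.pow_card]

lemma padic_pow_step {k : ℕ} {a b : ℤ_[p]} (h : (p : ℤ_[p]) ^ (k + 1) ∣ a - b) :
    (p : ℤ_[p]) ^ (k + 2) ∣ a ^ p - b ^ p := by
  have hab : (p : ℤ_[p]) ∣ a - b :=
    dvd_trans (dvd_pow_self (p : ℤ_[p]) (Nat.succ_ne_zero k)) h
  have htz : PadicInt.toZMod a = PadicInt.toZMod b := by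
    have := (padic_p_dvd_iff (a - b)).mp hab
    rw [map_sub, sub_eq_zero] at this
    exact this
  have hgeo : (p : ℤ_[p]) ∣ ∑ i ∈ range p, a ^ i * b ^ (p - 1 - i) := by
    rw [padic_p_dvd_iff, map_sum]
    have : ∀ i ∈ range p, PadicInt.toZMod (a ^ i * b ^ (p - 1 - i)) =
        (PadicInt.toZMod a) ^ (p - 1) := by
      intro i hi
      rw [map_mul, map_pow, map_pow, htz, ← pow_add]
      congr 1
      have := mem_range.mp hi
      omega
    rw [Finset.sum_congr rfl this, Finset.sum_const, card_range, nsmul_eq_mul]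
    simp [CharP.cast_eq_zero]
  rw [← geom_sum₂_mul a b p,
    show (p : ℤ_[p]) ^ (k + 2) = (p : ℤ_[p]) * (p : ℤ_[p]) ^ (k + 1) by ring]
  exact mul_dvd_mul hgeo h

lemma padic_iter (c : ℤ_[p]) : ∀ m : ℕ, (p : ℤ_[p]) ^ (m + 1) ∣ c ^ p ^ m - c ^ p ^ (m + 1)
  | 0 => by
      rw [pow_zero, pow_one, pow_one]
      simpa [neg_sub] using dvd_neg.mpr (padic_fermat c)
  | (m + 1) => by
      have := padic_pow_step (padic_iter c m)
      rwa [← pow_mul, ← pow_mul, ← pow_succ, ← pow_succ] at this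

end aux

section dwork

variable (p : ℕ) [hp : Fact p.Prime]

/-- Candidate Witt coordinates (in `ℚ_p`) of a Witt vector with ghost components `g`. -/
noncomputable def dseq (g : ℕ → ℤ_[p]) : ℕ → ℚ_[p]
  | n => ((g n : ℚ_[p]) -
      ∑ i ∈ (Finset.range n).attach,
        (p : ℚ_[p]) ^ (i : ℕ) * (dseq g i) ^ p ^ (n - (i : ℕ))) / (p : ℚ_[p]) ^ n
  decreasing_by exact Finset.mem_range.mp i.2

variable {p}

lemma dseq_def (g : ℕ → ℤ_[p]) (n : ℕ) :
    dseq p g n = ((g n : ℚ_[p]) -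
      ∑ i ∈ Finset.range n, (p : ℚ_[p]) ^ i * (dseq p g i) ^ p ^ (n - i)) / (p : ℚ_[p]) ^ n := by
  rw [dseq, ← Finset.sum_attach (Finset.range n)
      (fun i => (p : ℚ_[p]) ^ i * (dseq p g i) ^ p ^ (n - i))]

lemma qp_p_ne_zero : (p : ℚ_[p]) ≠ 0 :=
  Nat.cast_ne_zero.mpr hp.out.ne_zero

lemma padic_coe_sum {ι : Type*} (s : Finset ι) (f : ι → ℤ_[p]) :
    ((∑ i ∈ s, f i : ℤ_[p]) : ℚ_[p]) = ∑ i ∈ s, (f i : ℚ_[p]) :=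
  map_sum PadicInt.Coe.ringHom f s

lemma dseq_spec (g : ℕ → ℤ_[p]) (n : ℕ) :
    ∑ i ∈ Finset.range (n + 1), (p : ℚ_[p]) ^ i * (dseq p g i) ^ p ^ (n - i) = (g n : ℚ_[p]) := by
  rw [Finset.sum_range_succ, Nat.sub_self, pow_zero, pow_one, dseq_def,
    mul_div_cancel₀ _ (pow_ne_zero n qp_p_ne_zero)]
  ring

lemma dseq_int (g : ℕ → ℤ_[p]) (hg : ∀ n, (p : ℤ_[p]) ^ (n + 1) ∣ g (n + 1) - g n) :
    ∀ n, ∃ c : ℤ_[p], (c : ℚ_[p]) = dseq p g n := by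
  intro n
  induction n using Nat.strong_induction_on with
  | _ n ih =>
    match n with
    | 0 =>
      refine ⟨g 0, ?_⟩
      rw [dseq_def]
      simp
    | (n + 1) =>
      set c : ℕ → ℤ_[p] := fun i => if h : i < n + 1 then (ih i h).choose else 0 with hc_def
      have hc : ∀ i < n + 1, (c i : ℚ_[p]) = dseq p g i := by
        intro i h
        simp only [hc_def, dif_pos h]
        exact (ih i h).choose_spec
      have hgn : ∑ i ∈ Finset.range (n + 1), (p : ℤ_[p]) ^ i * (c i) ^ p ^ (n - i) = g n := by
        have hcast : ((∑ i ∈ Finset.range (n + 1), (p : ℤ_[p]) ^ i * (c i) ^ p ^ (n - i)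
            : ℤ_[p]) : ℚ_[p]) = ∑ i ∈ Finset.range (n + 1),
              (p : ℚ_[p]) ^ i * (dseq p g i) ^ p ^ (n - i) := by
          rw [padic_coe_sum]
          refine Finset.sum_congr rfl fun i hi => ?_
          rw [← hc i (Finset.mem_range.mp hi)]
          push_cast
          ring
        exact Subtype.coe_injective (hcast.trans (dseq_spec g n))
      have hdvd : (p : ℤ_[p]) ^ (n + 1) ∣
          g (n + 1) - ∑ i ∈ Finset.range (n + 1), (p : ℤ_[p]) ^ i * (c i) ^ p ^ (n + 1 - i) := by
        have hS : ∑ i ∈ Finset.range (n + 1),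
              (p : ℤ_[p]) ^ i * ((c i) ^ p ^ (n - i) - (c i) ^ p ^ (n + 1 - i)) =
            (∑ i ∈ Finset.range (n + 1), (p : ℤ_[p]) ^ i * (c i) ^ p ^ (n - i)) -
            ∑ i ∈ Finset.range (n + 1), (p : ℤ_[p]) ^ i * (c i) ^ p ^ (n + 1 - i) := by
          rw [← Finset.sum_sub_distrib]
          exact Finset.sum_congr rfl fun i _ => mul_sub _ _ _
        have h1 : g (n + 1) - ∑ i ∈ Finset.range (n + 1), (p : ℤ_[p]) ^ i * (c i) ^ p ^ (n + 1 - i)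
            = (g (n + 1) - g n) +
              ∑ i ∈ Finset.range (n + 1),
                (p : ℤ_[p]) ^ i * ((c i) ^ p ^ (n - i) - (c i) ^ p ^ (n + 1 - i)) := by
          rw [hS, hgn]; ring
        rw [h1]
        refine dvd_add (hg n) (Finset.dvd_sum ?_)
        intro i hi
        have hile : i ≤ n := Nat.lt_succ_iff.mp (Finset.mem_range.mp hi)
        have h2 : n + 1 - i = (n - i) + 1 := by omega
        have h4 : (p : ℤ_[p]) ^ (n + 1 - i) ∣ (c i) ^ p ^ (n - i) - (c i) ^ p ^ (n + 1 - i) := by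
          rw [h2]; exact padic_iter (c i) (n - i)
        have h3 : (p : ℤ_[p]) ^ (n + 1) = (p : ℤ_[p]) ^ i * (p : ℤ_[p]) ^ (n + 1 - i) := by
          rw [← pow_add]; congr 1; omega
        rw [h3]
        exact mul_dvd_mul_left _ h4
      obtain ⟨d, hd⟩ := hdvd
      refine ⟨d, ?_⟩
      rw [dseq_def, eq_div_iff (pow_ne_zero (n + 1) qp_p_ne_zero)]
      have hsum2 : ∑ i ∈ Finset.range (n + 1), (p : ℚ_[p]) ^ i * (dseq p g i) ^ p ^ (n + 1 - i) =
          ((∑ i ∈ Finset.range (n + 1), (p : ℤ_[p]) ^ i * (c i) ^ p ^ (n + 1 - i)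
            : ℤ_[p]) : ℚ_[p]) := by
        rw [padic_coe_sum]
        refine (Finset.sum_congr rfl fun i hi => ?_).symm
        rw [← hc i (Finset.mem_range.mp hi)]
        push_cast
        ring
      rw [hsum2]
      have hd2 := congrArg (fun z : ℤ_[p] => (z : ℚ_[p])) hd
      simp only [PadicInt.coe_sub, PadicInt.coe_mul, PadicInt.coe_pow,
        PadicInt.coe_natCast] at hd2
      linear_combination -hd2

/-- Dwork-style existence: any sequence satisfying the standard congruences is
the ghost sequence of a Witt vector over `ℤ_p`. -/
lemma exists_ghost (g : ℕ → ℤ_[p]) (hg : ∀ n, (p : ℤ_[p]) ^ (n + 1) ∣ g (n + 1) - g n) :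
    ∃ x : WittVector p ℤ_[p], ∀ n, ghostComponent n x = g n := by
  choose c hc using dseq_int g hg
  refine ⟨WittVector.mk p c, fun n => ?_⟩
  rw [ghostComponent_apply, aeval_wittPolynomial]
  have hcast : ((∑ i ∈ Finset.range (n + 1),
      (p : ℤ_[p]) ^ i * (WittVector.mk p c).coeff i ^ p ^ (n - i) : ℤ_[p]) : ℚ_[p]) =
      ∑ i ∈ Finset.range (n + 1), (p : ℚ_[p]) ^ i * (dseq p g i) ^ p ^ (n - i) := by
    rw [padic_coe_sum]
    refine Finset.sum_congr rfl fun i _ => ?_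
    rw [WittVector.coeff_mk, ← hc i]
    push_cast
    ring
  exact Subtype.coe_injective (hcast.trans (dseq_spec g n))

/-- The ghost map over `ℤ_p` is injective. -/
lemma ghost_inj {x y : WittVector p ℤ_[p]}
    (h : ∀ n, ghostComponent n x = ghostComponent n y) : x = y := by
  ext n
  induction n using Nat.strong_induction_on with
  | _ n ih =>
    have hn := h n
    rw [ghostComponent_apply, aeval_wittPolynomial, ghostComponent_apply, aeval_wittPolynomial,
      Finset.sum_range_succ, Finset.sum_range_succ,
      Finset.sum_congr rfl (fun i hi => by rw [ih i (Finset.mem_range.mp hi)])] at hn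
    have h2 := add_left_cancel hn
    rw [Nat.sub_self, pow_zero, pow_one, pow_one] at h2
    exact mul_left_cancel₀ (pow_ne_zero n (Nat.cast_ne_zero.mpr hp.out.ne_zero)) h2

end dwork

section main

variable {p : ℕ} [hp : Fact p.Prime]

lemma padic_isUnit_one_sub_p_mul (z : ℤ_[p]) : IsUnit (1 - (p : ℤ_[p]) * z) := by
  by_contra h
  rw [PadicInt.not_isUnit_iff, PadicInt.norm_lt_one_iff_dvd] at h
  obtain ⟨w, hw⟩ := h
  have hdvd : (p : ℤ_[p]) ∣ 1 := ⟨z + w, by linear_combination hw⟩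
  have : IsUnit (p : ℤ_[p]) := isUnit_of_dvd_one hdvd
  rw [PadicInt.isUnit_iff, PadicInt.norm_p] at this
  have h1 : (1 : ℝ) < p := by exact_mod_cast hp.out.one_lt
  have h2 : ((p : ℝ))⁻¹ < 1 := by
    rw [inv_lt_one_iff₀]
    right; exact h1
  rw [this] at h2
  exact lt_irrefl 1 h2

end main


/-- Let `p` be an odd prime. Then there exists a unit `x ∈ W(ℤ_p)` with
`p = [p] + V(F(x))` in `W(ℤ_p)`. In particular, the unique `y` with `p = [p] + V(y)`
lies in the image of the Frobenius `F` and is itself a unit of `W(ℤ_p)`. -/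
theorem stmt1 (p : ℕ) [Fact p.Prime] (hp : Odd p) :
    (∃ x : WittVector p ℤ_[p], IsUnit x ∧
      (p : WittVector p ℤ_[p]) = teichmuller p (p : ℤ_[p]) + verschiebung (frobenius x)) ∧
    (∀ y : WittVector p ℤ_[p],
      (p : WittVector p ℤ_[p]) = teichmuller p (p : ℤ_[p]) + verschiebung y →
      (∃ x : WittVector p ℤ_[p], frobenius x = y) ∧ IsUnit y) := by
  have hp2 : 2 ≤ p := Fact.out (p := p.Prime) |>.two_le
  have hp3 : 3 ≤ p := by
    rcases Nat.lt_or_ge p 3 with h | h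
    · interval_cases p
      · exact absurd hp (by decide)
    · exact h
  -- the sequence of ghost components
  set g : ℕ → ℤ_[p] := fun n => if n = 0 then 1 else 1 - (p : ℤ_[p]) ^ (p ^ n - 1) with hg_def
  have hpow3 : ∀ m : ℕ, m + 3 ≤ p ^ (m + 1) := by
    intro m
    induction m with
    | zero => simpa using hp3
    | succ m ih =>
      have h2 : p ^ (m + 1 + 1) = p * p ^ (m + 1) := pow_succ' p (m + 1)
      have h3 : 1 ≤ p ^ (m + 1) := Nat.one_le_pow _ _ (by omega)
      rw [h2]
      nlinarith
  have hg : ∀ n, (p : ℤ_[p]) ^ (n + 1) ∣ g (n + 1) - g n := by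
    intro n
    match n with
    | 0 =>
      have : g 1 - g 0 = -((p : ℤ_[p]) ^ (p - 1)) := by
        simp [hg_def]
      rw [this, pow_one, dvd_neg]
      exact dvd_pow_self _ (by omega)
    | (n + 1) =>
      have hdef : g (n + 2) - g (n + 1) =
          (p : ℤ_[p]) ^ (p ^ (n + 1) - 1) - (p : ℤ_[p]) ^ (p ^ (n + 2) - 1) := by
        simp only [hg_def, if_neg (Nat.succ_ne_zero _)]
        ring
      rw [hdef]
      have h1 := hpow3 n
      have h2 : n + 1 + 3 ≤ p ^ (n + 2) := hpow3 (n + 1)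
      exact dvd_sub (pow_dvd_pow _ (by omega)) (pow_dvd_pow _ (by omega))
  have hu : ∀ n, IsUnit (g n) := by
    intro n
    match n with
    | 0 => simp [hg_def]
    | (n + 1) =>
      have h1 := hpow3 n
      have hk : p ^ (n + 1) - 1 = (p ^ (n + 1) - 2) + 1 := by omega
      have hsplit : (p : ℤ_[p]) ^ (p ^ (n + 1) - 1) =
          (p : ℤ_[p]) * (p : ℤ_[p]) ^ (p ^ (n + 1) - 2) := by
        rw [hk, pow_succ']
      have : g (n + 1) = 1 - (p : ℤ_[p]) * (p : ℤ_[p]) ^ (p ^ (n + 1) - 2) := by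
        simp only [hg_def, if_neg (Nat.succ_ne_zero _)]
        rw [hsplit]
      rw [this]
      exact padic_isUnit_one_sub_p_mul _
  -- the inverse ghost sequence
  set ginv : ℕ → ℤ_[p] := fun n => (((hu n).unit⁻¹ : ℤ_[p]ˣ) : ℤ_[p]) with hginv_def
  have hmul : ∀ n, g n * ginv n = 1 := by
    intro n
    have := (hu n).unit.mul_inv
    rwa [IsUnit.unit_spec] at this
  have hginv : ∀ n, (p : ℤ_[p]) ^ (n + 1) ∣ ginv (n + 1) - ginv n := by
    intro n
    have key : ginv (n + 1) - ginv n = (g n - g (n + 1)) * (ginv n * ginv (n + 1)) := by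
      linear_combination (-(ginv (n + 1))) * hmul n + ginv n * hmul (n + 1)
    rw [key]
    exact ((dvd_sub_comm).mp (hg n)).mul_right _
  obtain ⟨x, hx⟩ := exists_ghost g hg
  obtain ⟨u, hu'⟩ := exists_ghost ginv hginv
  have hxu : x * u = 1 := by
    apply ghost_inj
    intro n
    rw [map_mul, map_one, hx n, hu' n, hmul n]
  have hxunit : IsUnit x := IsUnit.of_mul_eq_one u hxu
  have heq : (p : WittVector p ℤ_[p]) =
      teichmuller p (p : ℤ_[p]) + verschiebung (frobenius x) := by
    apply ghost_inj
    intro n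
    rw [map_natCast, map_add, ghostComponent_teichmuller]
    match n with
    | 0 =>
      rw [ghostComponent_zero_verschiebung, add_zero, pow_zero, pow_one]
    | (n + 1) =>
      rw [ghostComponent_verschiebung, ghostComponent_frobenius, hx (n + 1)]
      have h1 : 1 ≤ p ^ (n + 1) := Nat.one_le_pow _ _ (by omega)
      have hk : p ^ (n + 1) = (p ^ (n + 1) - 1) + 1 := by omega
      have hsplit : (p : ℤ_[p]) ^ (p ^ (n + 1)) =
          (p : ℤ_[p]) ^ (p ^ (n + 1) - 1) * p := by
        conv_lhs => rw [hk]
        rw [pow_succ]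
      simp only [hg_def, if_neg (Nat.succ_ne_zero _)]
      rw [hsplit]
      ring
  refine ⟨⟨x, hxunit, heq⟩, fun y hy => ?_⟩
  have hV : verschiebung (frobenius x) = verschiebung y :=
    add_left_cancel (heq.symm.trans hy)
  have hinj : Function.Injective (verschiebung : WittVector p ℤ_[p] → WittVector p ℤ_[p]) := by
    intro a b hab
    ext n
    have := congrArg (fun z : WittVector p ℤ_[p] => z.coeff (n + 1)) hab
    simpa [verschiebung_coeff_succ] using this
  have hFxy : frobenius x = y := hinj hV
  exact ⟨⟨x, hFxy⟩, hFxy ▸ hxunit.map (frobenius : WittVector p ℤ_[p] →+* WittVector p ℤ_[p])⟩
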